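/- arXiv:2201.09238 — 2 statements merged into one kernel-verified Lean document; each statement's English description precedes it below -/
import Mathlib

section
/- Let d ≥ 1, q > 1 and 0 < α < d. Let w : (0, ∞) → ℝ be a measurable function with ∫_0^∞ |w(ρ)|^{q/(q−1)} ρ^{(αq + 1 − d)/(q−1)} dρ < ∞ and set W(ρ) = ∫_ρ^∞ w(s) ds. Then there exists a constant C = C(d, q, α) > 0, independent of w and u, such that for every measurable u : ℝ^d → ℂ, | ∫_{ℝ^d} |u(x)| W(|x|) dx | ≤ C ( ∫_0^∞ |w(ρ)|^{q/(q−1)} ρ^{(αq + 1 − d)/(q−1)} dρ )^{(q−1)/q} ‖ |x|^{−α} ⋆ |u| ‖_{L^q(ℝ^d)}. -/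
open MeasureTheory Filter
open scoped ENNReal FourierTransform

noncomputable section

abbrev Ed (d : ℕ) : Type := EuclideanSpace ℝ (Fin d)

/-- A function on `ℝ^d` is radial if its value depends only on the norm. -/
def IsRadial {d : ℕ} (f : Ed d → ℂ) : Prop :=
  ∀ x y : Ed d, ‖x‖ = ‖y‖ → f x = f y

/-- `F` is (a function representative of) the Fourier transform of `f`, in the sense of
tempered distributions: pairing `F` against any Schwartz function `g` agrees with pairing
`f` against the Fourier transform of `g` (and all pairings are given by convergent
integrals). -/
def IsFourierPair {d : ℕ} (f F : Ed d → ℂ) : Prop :=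
  ∀ g : SchwartzMap (Ed d) ℂ,
    Integrable (fun x : Ed d => f x * FourierTransform.fourier (fun y : Ed d => g y) x) volume ∧
    Integrable (fun x : Ed d => F x * g x) volume ∧
    ∫ x : Ed d, F x * g x = ∫ x : Ed d, f x * FourierTransform.fourier (fun y : Ed d => g y) x

/-- `u = D^s f`, i.e. the (distributional) Fourier transform of `u` is
`‖ξ‖ ^ s` times the Fourier transform of `f`. -/
def IsDpow {d : ℕ} (s : ℝ) (f u : Ed d → ℂ) : Prop :=
  ∃ F : Ed d → ℂ,
    IsFourierPair f F ∧ IsFourierPair u (fun ξ : Ed d => ((‖ξ‖ ^ s : ℝ) : ℂ) * F ξ)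

/-- A complex-valued function is (a.e.) nonnegative real. -/
def AENonneg {d : ℕ} (u : Ed d → ℂ) : Prop :=
  ∀ᵐ x : Ed d ∂volume, 0 ≤ (u x).re ∧ (u x).im = 0

/-- The Riesz-type convolution `(|x|^{-α} ⋆ |u|)(x)`. -/
def rieszConv {d : ℕ} (α : ℝ) (u : Ed d → ℂ) (x : Ed d) : ℝ≥0∞ :=
  ∫⁻ y : Ed d, (‖u y‖₊ : ℝ≥0∞) / ENNReal.ofReal (‖x - y‖ ^ α)

/-- The `L^q` norm of the Riesz-type convolution `|x|^{-α} ⋆ |u|`. -/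
def rieszNorm {d : ℕ} (α q : ℝ) (u : Ed d → ℂ) : ℝ≥0∞ :=
  (∫⁻ x : Ed d, rieszConv α u x ^ q) ^ (1 / q)

/-- The homogeneous Sobolev norm `‖D^s f‖_{L²}` computed on the Fourier side (Plancherel):
`(∫ ‖ξ‖^{2s} ‖F ξ‖² dξ)^{1/2}` where `F = 𝓕 f`. -/
def fracNorm {d : ℕ} (s : ℝ) (F : Ed d → ℂ) : ℝ≥0∞ :=
  (∫⁻ ξ : Ed d, ENNReal.ofReal (‖ξ‖ ^ (2 * s)) * (‖F ξ‖₊ : ℝ≥0∞) ^ (2 : ℝ)) ^ (1 / (2 : ℝ))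


lemma aux_meas1 (c : ℝ) : Measurable fun s : ℝ => ENNReal.ofReal (s ^ c) := by measurability

lemma aux_meas2 {β : Type*} [MeasurableSpace β] {f : β → ℝ≥0∞} (hf : Measurable f) (c : ℝ) :
    Measurable fun s => f s ^ c := by measurability

section Polar
open Set Metric

theorem lintegral_fun_norm_addHaar' {E : Type*} [NormedAddCommGroup E] [NormedSpace ℝ E]
    [MeasurableSpace E] [BorelSpace E] [FiniteDimensional ℝ E] [Nontrivial E]
    (μ : Measure E) [μ.IsAddHaarMeasure] {g : ℝ → ℝ≥0∞} (hg : Measurable g) :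
    ∫⁻ x, g ‖x‖ ∂μ = (Module.finrank ℝ E) * μ (ball 0 1) *
      ∫⁻ r in Set.Ioi (0 : ℝ), g r * ENNReal.ofReal (r ^ (Module.finrank ℝ E - 1)) := by
  have h1 : ∫⁻ x, g ‖x‖ ∂μ = ∫⁻ x : ({0}ᶜ : Set E), g ‖x.1‖ ∂(μ.comap (↑)) := by
    rw [lintegral_subtype_comap (μ := μ) (measurableSet_singleton (0:E)).compl
      (fun x => g ‖x‖), restrict_compl_singleton]
  have hmeas : Measurable fun p : sphere (0 : E) 1 × Ioi (0 : ℝ) => g p.2.1 :=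
    hg.comp (measurable_subtype_coe.comp measurable_snd)
  have h2 := (Measure.measurePreserving_homeomorphUnitSphereProd μ).lintegral_comp
    (f := fun p : sphere (0 : E) 1 × Ioi (0 : ℝ) => g p.2.1) hmeas
  simp only [homeomorphUnitSphereProd_apply_snd_coe] at h2
  have h3 : ∫⁻ y : Ioi (0:ℝ), g y.1 ∂(Measure.volumeIoiPow (Module.finrank ℝ E - 1)) =
      ∫⁻ r in Set.Ioi (0 : ℝ), g r * ENNReal.ofReal (r ^ (Module.finrank ℝ E - 1)) := by
    rw [Measure.volumeIoiPow, lintegral_withDensity_eq_lintegral_mul _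
      (f := fun r : Ioi (0:ℝ) => ENNReal.ofReal (r.1 ^ (Module.finrank ℝ E - 1)))
      (by exact (measurable_subtype_coe.pow_const _).ennreal_ofReal)
      (g := fun a : Ioi (0:ℝ) => g a.1) (hg.comp measurable_subtype_coe)]
    rw [show (fun a : Ioi (0:ℝ) =>
        ((fun r : Ioi (0:ℝ) => ENNReal.ofReal (r.1 ^ (Module.finrank ℝ E - 1))) *
          fun a : Ioi (0:ℝ) => g a.1) a)
      = fun a : Ioi (0:ℝ) => (fun r : ℝ =>
          g r * ENNReal.ofReal (r ^ (Module.finrank ℝ E - 1))) a.1 from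
        funext fun a => by simp [mul_comm]]
    exact lintegral_subtype_comap (μ := volume) measurableSet_Ioi
      (fun r : ℝ => g r * ENNReal.ofReal (r ^ (Module.finrank ℝ E - 1)))
  rw [h1, h2, lintegral_prod _ hmeas.aemeasurable]
  simp only [lintegral_const]
  rw [h3, Measure.toSphere_apply_univ, mul_comm]

end Polar

/-- Lemma `lem:important2`: weighted pairing of `|u|` against
`W(|x|) = ∫_{|x|}^∞ w(s) ds` is controlled by the `L^q` norm of the Riesz potential. -/
theorem statement10 (d : ℕ) (hd : 1 ≤ d) (q α : ℝ)
    (hq : 1 < q) (hα1 : 0 < α) (hα2 : α < (d : ℝ)) :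
    ∃ C : ℝ, 0 < C ∧
      ∀ w : ℝ → ℝ, Measurable w →
        (∫⁻ ρ in Set.Ioi (0 : ℝ),
            ENNReal.ofReal (|w ρ| ^ (q / (q - 1)) * ρ ^ ((α * q + 1 - (d : ℝ)) / (q - 1)))) < ⊤ →
        ∀ u : Ed d → ℂ, Measurable u →
          ENNReal.ofReal |∫ x : Ed d, ‖u x‖ * (∫ s in Set.Ioi ‖x‖, w s)| ≤
            ENNReal.ofReal C *
              (∫⁻ ρ in Set.Ioi (0 : ℝ),
                ENNReal.ofReal (|w ρ| ^ (q / (q - 1)) * ρ ^ ((α * q + 1 - (d : ℝ)) / (q - 1))))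
                ^ ((q - 1) / q) *
              rieszNorm α q u := by
  classical
  haveI : Nonempty (Fin d) := ⟨⟨0, hd⟩⟩
  haveI : Nontrivial (Ed d) := inferInstance
  set q' : ℝ := q / (q - 1) with hq'def
  have hq1 : (0:ℝ) < q - 1 := by linarith
  have hq0 : (0:ℝ) < q := by linarith
  have hcon : q'.HolderConjugate q := (Real.HolderConjugate.conjExponent hq).symm
  have hq'pos : 0 < q' := hcon.pos
  set β : ℝ := (α * q + 1 - (d : ℝ)) / q with hβdef
  have hβq' : β * q' = (α * q + 1 - (d : ℝ)) / (q - 1) := by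
    rw [hβdef, hq'def, div_mul_div_comm, mul_comm q, mul_div_mul_right _ _ hq0.ne']
  have hβq : (-β) * q = (d:ℝ) - 1 - α * q := by
    rw [hβdef, neg_mul, div_mul_cancel₀ _ hq0.ne']
    ring
  -- the constant
  set V : ℝ≥0∞ := volume (Metric.ball (0 : Ed d) 1) with hVdef
  have hV0 : V ≠ 0 := (Metric.measure_ball_pos volume 0 one_pos).ne'
  have hVtop : V ≠ ⊤ := measure_ball_lt_top.ne
  set DV : ℝ≥0∞ := (d : ℝ≥0∞) * V with hDVdef
  have hDV0 : DV ≠ 0 := by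
    simp only [hDVdef, mul_ne_zero_iff]
    exact ⟨Nat.cast_ne_zero.mpr (by omega), hV0⟩
  have hDVtop : DV ≠ ⊤ := ENNReal.mul_ne_top (ENNReal.natCast_ne_top d) hVtop
  set K : ℝ≥0∞ := (DV⁻¹ * ENNReal.ofReal ((2:ℝ) ^ (α * q))) ^ (1 / q) with hKdef
  have hKtop : K ≠ ⊤ := by
    refine ENNReal.rpow_ne_top_of_nonneg (by positivity) ?_
    exact ENNReal.mul_ne_top (ENNReal.inv_ne_top.mpr hDV0) ENNReal.ofReal_ne_top
  refine ⟨K.toReal + 1, by positivity, ?_⟩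
  intro w hw hA u hu
  set A : ℝ≥0∞ := ∫⁻ ρ in Set.Ioi (0 : ℝ),
      ENNReal.ofReal (|w ρ| ^ q' * ρ ^ ((α * q + 1 - (d : ℝ)) / (q - 1))) with hAdef
  set R : ℝ≥0∞ := ∫⁻ x : Ed d, rieszConv α u x ^ q with hRdef
  -- the truncated mass function
  set h : ℝ → ℝ≥0∞ := fun s => ∫⁻ x in {x : Ed d | ‖x‖ < s}, (‖u x‖₊ : ℝ≥0∞) with hhdef
  have hsetmeas : ∀ s : ℝ, MeasurableSet {x : Ed d | ‖x‖ < s} := fun s =>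
    measurableSet_lt measurable_norm measurable_const
  have hS : MeasurableSet {p : Ed d × ℝ | ‖p.1‖ < p.2} :=
    measurableSet_lt (measurable_fst.norm) measurable_snd
  have hh_meas : Measurable h := by
    have hm : Measurable (Function.uncurry fun (s : ℝ) (x : Ed d) =>
        ({p : Ed d × ℝ | ‖p.1‖ < p.2}).indicator (fun p => (‖u p.1‖₊ : ℝ≥0∞)) (x, s)) := by
      exact ((hu.comp measurable_fst).enorm.indicator hS).comp measurable_swap
    have h2 := Measurable.lintegral_prod_right (ν := (volume : Measure (Ed d))) hm
    convert h2 using 1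
    funext s
    rw [hhdef]
    simp only []
    rw [← lintegral_indicator (hsetmeas s)]
    exact lintegral_congr fun x => by by_cases hxs : ‖x‖ < s <;> simp [Set.indicator, hxs]
  have hh_zero : ∀ s : ℝ, s ≤ 0 → h s = 0 := by
    intro s hs
    have hempty : {x : Ed d | ‖x‖ < s} = ∅ := by
      ext x; simp only [Set.mem_setOf_eq, Set.mem_empty_iff_false, iff_false, not_lt]
      exact hs.trans (norm_nonneg x)
    rw [hhdef]; simp only []; rw [hempty]
    simp
  -- Step 1+2 : LHS ≤ J
  set J : ℝ≥0∞ := ∫⁻ s in Set.Ioi (0:ℝ), (‖w s‖₊ : ℝ≥0∞) * h s with hJdef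
  have step12 : ENNReal.ofReal |∫ x : Ed d, ‖u x‖ * (∫ s in Set.Ioi ‖x‖, w s)| ≤ J := by
    rw [← Real.enorm_eq_ofReal_abs]
    refine le_trans (enorm_integral_le_lintegral_enorm _) ?_
    have pt : ∀ x : Ed d, (‖(‖u x‖ * ∫ s in Set.Ioi ‖x‖, w s)‖₊ : ℝ≥0∞) ≤
        (‖u x‖₊ : ℝ≥0∞) * ∫⁻ s in Set.Ioi ‖x‖, (‖w s‖₊ : ℝ≥0∞) := by
      intro x
      rw [nnnorm_mul, ENNReal.coe_mul, nnnorm_norm]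
      exact mul_le_mul_right (enorm_integral_le_lintegral_enorm _) _
    refine le_trans (lintegral_mono pt) ?_
    have swap1 : ∫⁻ x : Ed d, (‖u x‖₊ : ℝ≥0∞) * ∫⁻ s in Set.Ioi ‖x‖, (‖w s‖₊ : ℝ≥0∞)
        = ∫⁻ s : ℝ, (‖w s‖₊ : ℝ≥0∞) * h s := by
      have e1 : ∀ x : Ed d, (‖u x‖₊ : ℝ≥0∞) * (∫⁻ s in Set.Ioi ‖x‖, (‖w s‖₊ : ℝ≥0∞))
          = ∫⁻ s : ℝ, ({p : Ed d × ℝ | ‖p.1‖ < p.2}).indicator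
              (fun p => (‖u p.1‖₊ : ℝ≥0∞) * (‖w p.2‖₊ : ℝ≥0∞)) (x, s) := by
        intro x
        rw [← lintegral_const_mul (f := fun s => (‖w s‖₊ : ℝ≥0∞)) _ hw.enorm, ← lintegral_indicator measurableSet_Ioi]
        refine lintegral_congr fun s => ?_
        by_cases hxs : ‖x‖ < s <;> simp [Set.indicator, hxs, Set.mem_Ioi]
      have e2 : ∀ s : ℝ, (∫⁻ x : Ed d, ({p : Ed d × ℝ | ‖p.1‖ < p.2}).indicator
              (fun p => (‖u p.1‖₊ : ℝ≥0∞) * (‖w p.2‖₊ : ℝ≥0∞)) (x, s))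
          = (‖w s‖₊ : ℝ≥0∞) * h s := by
        intro s
        have e3 : ∀ x : Ed d, ({p : Ed d × ℝ | ‖p.1‖ < p.2}).indicator
              (fun p => (‖u p.1‖₊ : ℝ≥0∞) * (‖w p.2‖₊ : ℝ≥0∞)) (x, s)
            = ({x : Ed d | ‖x‖ < s}).indicator (fun x => (‖u x‖₊ : ℝ≥0∞) * (‖w s‖₊ : ℝ≥0∞)) x := by
          intro x; by_cases hxs : ‖x‖ < s <;> simp [Set.indicator, hxs]
        simp_rw [e3]
        rw [lintegral_indicator (hsetmeas s), lintegral_mul_const' _ _ ENNReal.coe_ne_top,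
          mul_comm]
      simp_rw [e1]
      rw [lintegral_lintegral_swap]
      · exact lintegral_congr e2
      · exact ((((hu.comp measurable_fst).enorm).mul
          ((hw.comp measurable_snd).enorm)).indicator hS).aemeasurable
    rw [swap1, hJdef]
    rw [← lintegral_indicator measurableSet_Ioi]
    refine le_of_eq (lintegral_congr fun s => ?_)
    by_cases hs : 0 < s
    · simp [Set.indicator, hs]
    · simp [Set.indicator, hs, hh_zero s (not_lt.mp hs)]
  -- Step 3 : Hölder
  set B : ℝ≥0∞ := ∫⁻ s in Set.Ioi (0:ℝ),
      h s ^ q * ENNReal.ofReal (s ^ ((d:ℝ) - 1 - α * q)) with hBdef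
  have step3 : J ≤ A ^ ((q-1)/q) * B ^ (1/q) := by
    set f : ℝ → ℝ≥0∞ := fun s => (‖w s‖₊ : ℝ≥0∞) * ENNReal.ofReal (s ^ β) with hfdef
    set g : ℝ → ℝ≥0∞ := fun s => h s * ENNReal.ofReal (s ^ (-β)) with hgdef
    have hfm : Measurable f := hw.enorm.mul (aux_meas1 β)
    have hgm : Measurable g := hh_meas.mul (aux_meas1 (-β))
    have hJfg : J = ∫⁻ s in Set.Ioi (0:ℝ), (f * g) s := by
      refine lintegral_congr_ae ?_
      filter_upwards [ae_restrict_mem measurableSet_Ioi] with s hs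
      have h1 : ENNReal.ofReal (s ^ β) * ENNReal.ofReal (s ^ (-β)) = 1 := by
        rw [← ENNReal.ofReal_mul (Real.rpow_nonneg (le_of_lt hs) _),
          ← Real.rpow_add hs, add_neg_cancel, Real.rpow_zero, ENNReal.ofReal_one]
      simp only [hfdef, hgdef, Pi.mul_apply]
      rw [mul_mul_mul_comm, h1, mul_one]
    have holder := ENNReal.lintegral_mul_le_Lp_mul_Lq (volume.restrict (Set.Ioi (0:ℝ)))
      hcon hfm.aemeasurable hgm.aemeasurable
    have hfA : ∫⁻ s in Set.Ioi (0:ℝ), f s ^ q' = A := by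
      refine lintegral_congr_ae ?_
      filter_upwards [ae_restrict_mem measurableSet_Ioi] with s hs
      rw [hfdef]
      simp only []
      rw [ENNReal.mul_rpow_of_nonneg _ _ hq'pos.le,
        ← enorm_eq_nnnorm, Real.enorm_eq_ofReal_abs,
        ENNReal.ofReal_rpow_of_nonneg (abs_nonneg _) hq'pos.le,
        ENNReal.ofReal_rpow_of_nonneg (Real.rpow_nonneg hs.le _) hq'pos.le,
        ← Real.rpow_mul hs.le,
        ← ENNReal.ofReal_mul (by positivity), hβq']
    have hgB : ∫⁻ s in Set.Ioi (0:ℝ), g s ^ q = B := by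
      refine lintegral_congr_ae ?_
      filter_upwards [ae_restrict_mem measurableSet_Ioi] with s hs
      rw [hgdef]
      simp only []
      rw [ENNReal.mul_rpow_of_nonneg _ _ hq0.le,
        ENNReal.ofReal_rpow_of_nonneg (Real.rpow_nonneg hs.le _) hq0.le,
        ← Real.rpow_mul hs.le, hβq]
    rw [hJfg]
    refine le_trans holder ?_
    rw [hfA, hgB]
    have hd1 : 1 / q' = (q-1)/q := by rw [hq'def, one_div_div]
    rw [hd1]
  -- key pointwise bound
  have hpoint : ∀ (s : ℝ) (x : Ed d), ‖x‖ ≤ s → 0 < s →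
      h s ≤ ENNReal.ofReal ((2*s) ^ α) * rieszConv α u x := by
    intro s x hxs hs
    set D : ℝ≥0∞ := ENNReal.ofReal ((2*s) ^ α) with hDdef
    have hD0 : D ≠ 0 :=
      (ENNReal.ofReal_pos.mpr (Real.rpow_pos_of_pos (by linarith) α)).ne'
    have hDtop : D ≠ ⊤ := ENNReal.ofReal_ne_top
    have key : h s * D⁻¹ ≤ rieszConv α u x := by
      have e1 : h s * D⁻¹ = ∫⁻ y in {y : Ed d | ‖y‖ < s}, (‖u y‖₊ : ℝ≥0∞) * D⁻¹ :=
        (lintegral_mul_const' _ _ (ENNReal.inv_ne_top.mpr hD0)).symm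
      rw [e1]
      have e2 : (∫⁻ y in {y : Ed d | ‖y‖ < s}, (‖u y‖₊ : ℝ≥0∞) * D⁻¹)
          ≤ ∫⁻ y in {y : Ed d | ‖y‖ < s}, (‖u y‖₊ : ℝ≥0∞) / ENNReal.ofReal (‖x - y‖ ^ α) := by
        refine lintegral_mono_ae ?_
        filter_upwards [ae_restrict_mem (hsetmeas s)] with y hy
        rw [← div_eq_mul_inv]
        refine ENNReal.div_le_div_left ?_ _
        refine ENNReal.ofReal_le_ofReal ?_
        refine Real.rpow_le_rpow (norm_nonneg _) ?_ hα1.le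
        have := norm_sub_le x y
        have hy' : ‖y‖ < s := hy
        linarith
      refine le_trans e2 ?_
      exact setLIntegral_le_lintegral _ _
    calc h s = h s * D⁻¹ * D := by
          rw [mul_assoc, ENNReal.inv_mul_cancel hD0 hDtop, mul_one]
      _ ≤ rieszConv α u x * D := mul_le_mul_left key _
      _ = D * rieszConv α u x := mul_comm _ _
  -- Step 4 : polar coordinates
  set Φ : ℝ → ℝ≥0∞ := fun s => h s ^ q * ENNReal.ofReal (s ^ (-(α*q))) with hΦdef
  have hΦm : Measurable Φ := (aux_meas2 hh_meas q).mul (aux_meas1 _)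
  have hrank : Module.finrank ℝ (Ed d) = d := finrank_euclideanSpace_fin
  have hpolar := lintegral_fun_norm_addHaar' (volume : Measure (Ed d)) hΦm
  rw [hrank] at hpolar
  have hB2 : ∫⁻ r in Set.Ioi (0:ℝ), Φ r * ENNReal.ofReal (r ^ (d - 1)) = B := by
    refine lintegral_congr_ae ?_
    filter_upwards [ae_restrict_mem measurableSet_Ioi] with r hr
    rw [hΦdef]
    simp only []
    rw [mul_assoc]
    congr 1
    rw [← Real.rpow_natCast r (d-1), ← ENNReal.ofReal_mul (Real.rpow_nonneg hr.le _),
      ← Real.rpow_add hr]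
    congr 2
    have : ((d - 1 : ℕ) : ℝ) = (d:ℝ) - 1 := by
      push_cast [Nat.cast_sub hd]
      ring
    rw [this]
    ring
  have hΦbound : ∫⁻ x : Ed d, Φ ‖x‖ ≤ ENNReal.ofReal ((2:ℝ) ^ (α*q)) * R := by
    rw [hRdef, ← lintegral_const_mul' _ _ ENNReal.ofReal_ne_top]
    refine lintegral_mono fun x => ?_
    rcases eq_or_lt_of_le (norm_nonneg x) with hx0 | hx0
    · rw [hΦdef]
      simp only []
      rw [← hx0, Real.zero_rpow (neg_ne_zero.mpr (by positivity))]
      simp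
    · have hp := hpoint ‖x‖ x le_rfl hx0
      have hstep : h ‖x‖ ^ q ≤ (ENNReal.ofReal ((2*‖x‖) ^ α) * rieszConv α u x) ^ q :=
        ENNReal.rpow_le_rpow hp hq0.le
      rw [ENNReal.mul_rpow_of_nonneg _ _ hq0.le,
        ENNReal.ofReal_rpow_of_nonneg (by positivity) hq0.le,
        ← Real.rpow_mul (by positivity)] at hstep
      have e4 : ((2:ℝ)*‖x‖) ^ (α * q) = (2:ℝ) ^ (α*q) * ‖x‖ ^ (α*q) :=
        Real.mul_rpow (by norm_num) (norm_nonneg x)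
      rw [e4, ENNReal.ofReal_mul (by positivity)] at hstep
      calc Φ ‖x‖ = h ‖x‖ ^ q * ENNReal.ofReal (‖x‖ ^ (-(α*q))) := rfl
        _ ≤ ENNReal.ofReal ((2:ℝ)^(α*q)) * ENNReal.ofReal (‖x‖^(α*q)) * rieszConv α u x ^ q
            * ENNReal.ofReal (‖x‖ ^ (-(α*q))) := mul_le_mul_left hstep _
        _ = ENNReal.ofReal ((2:ℝ)^(α*q)) * rieszConv α u x ^ q *
            (ENNReal.ofReal (‖x‖^(α*q)) * ENNReal.ofReal (‖x‖ ^ (-(α*q)))) := by ring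
        _ = ENNReal.ofReal ((2:ℝ)^(α*q)) * rieszConv α u x ^ q := by
            rw [← ENNReal.ofReal_mul (Real.rpow_nonneg (norm_nonneg x) _),
              ← Real.rpow_add hx0, add_neg_cancel, Real.rpow_zero, ENNReal.ofReal_one, mul_one]
  have hBbound : B ≤ DV⁻¹ * ENNReal.ofReal ((2:ℝ) ^ (α*q)) * R := by
    have hBeq : B = DV⁻¹ * ∫⁻ x : Ed d, Φ ‖x‖ := by
      rw [hpolar, ← hB2, hDVdef, hVdef, ← mul_assoc,
        ENNReal.inv_mul_cancel hDV0 hDVtop, one_mul]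
    rw [hBeq, mul_assoc]
    exact mul_le_mul_right hΦbound _
  -- assemble
  refine le_trans step12 (le_trans step3 ?_)
  have hfac : B ^ (1/q) ≤ K * R ^ (1/q) := by
    have h1 : B ≤ DV⁻¹ * ENNReal.ofReal ((2:ℝ) ^ (α*q)) * R := hBbound
    calc B ^ (1/q) ≤ (DV⁻¹ * ENNReal.ofReal ((2:ℝ) ^ (α*q)) * R) ^ (1/q) :=
          ENNReal.rpow_le_rpow h1 (by positivity)
      _ = K * R ^ (1/q) := by
          rw [hKdef, ← ENNReal.mul_rpow_of_nonneg _ _ (by positivity : (0:ℝ) ≤ 1/q)]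
  have hKC : K ≤ ENNReal.ofReal (K.toReal + 1) := by
    calc K = ENNReal.ofReal K.toReal := (ENNReal.ofReal_toReal hKtop).symm
      _ ≤ ENNReal.ofReal (K.toReal + 1) := ENNReal.ofReal_le_ofReal (by linarith)
  have hRN : rieszNorm α q u = R ^ (1/q) := by rw [rieszNorm, hRdef]
  rw [hRN]
  calc A ^ ((q-1)/q) * B ^ (1/q) ≤ A ^ ((q-1)/q) * (K * R ^ (1/q)) :=
        mul_le_mul_right hfac _
    _ = K * A ^ ((q-1)/q) * R ^ (1/q) := by ring
    _ ≤ ENNReal.ofReal (K.toReal + 1) * A ^ ((q-1)/q) * R ^ (1/q) :=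
        mul_le_mul_left (mul_le_mul_left hKC _) _


end
end

section
/- Let d ≥ 2 and γ > d − 1. Then there exists a constant C = C(d, γ) > 0 such that for all r, ρ > 0 with r/2 ≤ ρ ≤ 2r and every unit vector θ ∈ 𝕊^{d−1}, the spherical kernel K(r, ρ) = ∫_{𝕊^{d−1}} (1 + |rθ − ρω|^2)^{−γ/2} dω satisfies K(r, ρ) ≤ C r^{−(d−1)}, where dω is the surface measure on the unit sphere 𝕊^{d−1} ⊂ ℝ^d. -/
open MeasureTheory Filter
open scoped ENNReal FourierTransform

noncomputable section

open Metric Set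
open scoped NNReal RealInnerProductSpace

lemma sqrt_one_sub_sq_lip {a b : ℝ} (ha0 : 0 ≤ a) (ha : a ≤ 1/2) (hb0 : 0 ≤ b) (hb : b ≤ 1/2) :
    |Real.sqrt (1 - a^2) - Real.sqrt (1 - b^2)| ≤ |a - b| := by
  set u := Real.sqrt (1 - a^2) with hu
  set v := Real.sqrt (1 - b^2) with hv
  have hu0 : 0 ≤ u := Real.sqrt_nonneg _
  have hv0 : 0 ≤ v := Real.sqrt_nonneg _
  have hu2 : u^2 = 1 - a^2 := Real.sq_sqrt (by nlinarith)
  have hv2 : v^2 = 1 - b^2 := Real.sq_sqrt (by nlinarith)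
  have hu1 : 1/2 ≤ u := by nlinarith
  have hv1 : 1/2 ≤ v := by nlinarith
  have h1 : (u - v) * (u + v) = (b - a) * (b + a) := by nlinarith
  have h2 : a + b ≤ u + v := by linarith
  have h3 : ((u - v) * (u + v))^2 = ((b - a) * (b + a))^2 := by rw [h1]
  have h4 : (a + b)^2 ≤ (u + v)^2 := by nlinarith
  have h5 : 1 ≤ (u + v)^2 := by nlinarith
  have hp : (0:ℝ) < (u + v)^2 := by nlinarith
  have h6 : (u - v)^2 * (u + v)^2 ≤ (a - b)^2 * (u + v)^2 := by
    calc (u - v)^2 * (u + v)^2 = ((u - v) * (u + v))^2 := by ring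
      _ = ((b - a) * (b + a))^2 := h3
      _ = (a - b)^2 * (a + b)^2 := by ring
      _ ≤ (a - b)^2 * (u + v)^2 := mul_le_mul_of_nonneg_left h4 (sq_nonneg _)
  have key : (u - v)^2 ≤ (a - b)^2 := le_of_mul_le_mul_right h6 hp
  calc |u - v| = Real.sqrt ((u-v)^2) := (Real.sqrt_sq_eq_abs _).symm
    _ ≤ Real.sqrt ((a-b)^2) := Real.sqrt_le_sqrt key
    _ = |a - b| := Real.sqrt_sq_eq_abs _

lemma norm_smul_sub_smul_sq {d : ℕ} (θ ω : Ed d) (hθ : ‖θ‖ = 1) (hω : ‖ω‖ = 1) (r ρ : ℝ) :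
    ‖r • θ - ρ • ω‖^2 = (r - ρ)^2 + r * ρ * ‖θ - ω‖^2 := by
  have e1 : ‖r • θ - ρ • ω‖^2 = r^2 - 2*(r*ρ*⟪θ, ω⟫) + ρ^2 := by
    rw [norm_sub_sq_real]
    simp only [norm_smul, real_inner_smul_left, real_inner_smul_right, Real.norm_eq_abs,
      mul_pow, sq_abs, hθ, hω]
    ring
  have e2 : ‖θ - ω‖^2 = 2 - 2*⟪θ, ω⟫ := by
    rw [norm_sub_sq_real, hθ, hω]; ring
  nlinarith [e1, e2]


set_option maxHeartbeats 1000000 in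
lemma capSmall (d : ℕ) (hd : 2 ≤ d) :
    ∃ A : ℝ≥0∞, A ≠ ⊤ ∧ ∀ (θ : Ed d), ‖θ‖ = 1 → ∀ t : ℝ, 0 < t → t ≤ 1/2 →
      μH[(d : ℝ) - 1] (sphere (0 : Ed d) 1 ∩ closedBall θ t)
        ≤ A * ENNReal.ofReal (t ^ (d - 1)) := by
  set n := d - 1 with hn
  have hs : ((d : ℝ) - 1) = (n : ℝ) := by
    have : (1:ℕ) ≤ d := by omega
    rw [hn]; push_cast [Nat.cast_sub this]; ring
  have h0 : (0:ℝ) ≤ (d:ℝ) - 1 := by rw [hs]; positivity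
  set K : ℝ≥0 := (Fintype.card (Fin n) : ℝ≥0) ^ ((1 / (2:ℝ≥0∞)).toReal) with hK
  refine ⟨((2:ℝ≥0) : ℝ≥0∞) ^ ((d:ℝ) - 1) * (K : ℝ≥0∞) ^ ((d:ℝ) - 1)
      * ENNReal.ofReal ((2:ℝ) ^ n), ?_, ?_⟩
  · refine ENNReal.mul_ne_top (ENNReal.mul_ne_top ?_ ?_) ENNReal.ofReal_ne_top <;>
      exact ENNReal.rpow_ne_top_of_nonneg h0 ENNReal.coe_ne_top
  intro θ hθ t ht ht2
  have hθ0 : θ ≠ 0 := by intro h; rw [h, norm_zero] at hθ; norm_num at hθ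
  haveI : Fact (Module.finrank ℝ (Ed d) = n + 1) := ⟨by rw [finrank_euclideanSpace_fin]; omega⟩
  set V := (ℝ ∙ θ)ᗮ with hVdef
  have hV : Module.finrank ℝ V = n := Submodule.finrank_orthogonal_span_singleton hθ0
  set L : V ≃ₗᵢ[ℝ] EuclideanSpace ℝ (Fin n) :=
    ((stdOrthonormalBasis ℝ V).reindex (finCongr hV)).repr with hL
  set f : EuclideanSpace ℝ (Fin n) → Ed d :=
    fun y => Real.sqrt (1 - ‖y‖^2) • θ + (L.symm y : Ed d) with hf
  -- Lipschitz bound for f on the half ball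
  have hlip : LipschitzOnWith 2 f (closedBall 0 (1/2)) := by
    apply LipschitzOnWith.of_dist_le_mul
    intro y hy y' hy'
    have hy05 : ‖y‖ ≤ 1/2 := by simpa [dist_eq_norm] using hy
    have hy'05 : ‖y'‖ ≤ 1/2 := by simpa [dist_eq_norm] using hy'
    have h1 : |Real.sqrt (1 - ‖y‖^2) - Real.sqrt (1 - ‖y'‖^2)| ≤ ‖y - y'‖ :=
      le_trans (sqrt_one_sub_sq_lip (norm_nonneg _) hy05 (norm_nonneg _) hy'05)
        (abs_norm_sub_norm_le _ _)
    have hsplit : f y - f y' =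
        (Real.sqrt (1 - ‖y‖^2) - Real.sqrt (1 - ‖y'‖^2)) • θ
          + ((L.symm y : Ed d) - (L.symm y' : Ed d)) := by
      simp only [hf, sub_smul]; abel
    have h2 : ‖(L.symm y : Ed d) - (L.symm y' : Ed d)‖ = ‖y - y'‖ := by
      rw [← Submodule.coe_sub, Submodule.norm_coe, ← map_sub, LinearIsometryEquiv.norm_map]
    calc dist (f y) (f y') = ‖f y - f y'‖ := dist_eq_norm _ _
      _ ≤ ‖(Real.sqrt (1 - ‖y‖^2) - Real.sqrt (1 - ‖y'‖^2)) • θ‖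
          + ‖(L.symm y : Ed d) - (L.symm y' : Ed d)‖ := by rw [hsplit]; exact norm_add_le _ _
      _ ≤ ‖y - y'‖ + ‖y - y'‖ := by
          rw [norm_smul, hθ, mul_one, h2, Real.norm_eq_abs]
          exact add_le_add_left h1 _
      _ = (2:ℝ≥0) * dist y y' := by rw [dist_eq_norm]; push_cast; ring
  -- the cap is contained in the image of the small ball
  have hsub : sphere (0 : Ed d) 1 ∩ closedBall θ t ⊆ f '' (closedBall 0 t) := by
    rintro ω ⟨hω1, hω2⟩
    have hω : ‖ω‖ = 1 := by simpa using hω1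
    have hdist : ‖ω - θ‖ ≤ t := by simpa [dist_eq_norm] using hω2
    set c : ℝ := ⟪θ, ω⟫ with hc
    have hcomm : ⟪ω, θ⟫ = c := real_inner_comm θ ω
    have hsq : ‖ω - θ‖^2 = 2 - 2*c := by
      rw [norm_sub_sq_real, hω, hθ, hcomm]; ring
    have hc1 : c ≤ 1 := by
      have := real_inner_le_norm θ ω; rw [hθ, hω] at this; simpa using this
    have h14 : ‖ω - θ‖^2 ≤ 1/4 := by nlinarith [norm_nonneg (ω - θ)]
    have hc78 : 7/8 ≤ c := by linarith [hsq, h14]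
    have hwmem : ω - c • θ ∈ V := by
      rw [hVdef, Submodule.mem_orthogonal_singleton_iff_inner_right, inner_sub_right,
        real_inner_smul_right, real_inner_self_eq_norm_sq, hθ, ← hc]
      ring
    set w : V := ⟨ω - c • θ, hwmem⟩ with hw
    set y := L w with hy
    have hyn : ‖y‖ = ‖ω - c • θ‖ := by
      rw [hy, LinearIsometryEquiv.norm_map, hw]; rfl
    have hwn : ‖ω - c • θ‖^2 = 1 - c^2 := by
      rw [norm_sub_sq_real, real_inner_smul_right, hcomm, norm_smul, hω, Real.norm_eq_abs,
        hθ, mul_one, sq_abs]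
      ring
    have hA : ‖ω - θ‖^2 ≤ t^2 := pow_le_pow_left₀ (norm_nonneg _) hdist 2
    have hy2 : ‖y‖^2 ≤ t^2 := by
      rw [hyn, hwn]
      nlinarith [sq_nonneg (1 - c)]
    have hyt : ‖y‖ ≤ t := le_of_pow_le_pow_left₀ (by norm_num) ht.le hy2
    refine ⟨y, by simpa [dist_eq_norm] using hyt, ?_⟩
    have h1y : 1 - ‖y‖^2 = c^2 := by rw [hyn, hwn]; ring
    have hsqrt : Real.sqrt (1 - ‖y‖^2) = c := by
      rw [h1y]; exact Real.sqrt_sq (by linarith)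
    show Real.sqrt (1 - ‖y‖^2) • θ + (L.symm y : Ed d) = ω
    rw [hsqrt, hy, LinearIsometryEquiv.symm_apply_apply, hw]
    show c • θ + (ω - c • θ) = ω
    abel
  -- Lipschitz equivalence between the euclidean and sup-metric balls
  have hsymm : LipschitzWith K (WithLp.equiv 2 (Fin n → ℝ)).symm := by
    intro a b
    have h := (PiLp.antilipschitzWith_ofLp 2 (fun _ : Fin n => ℝ))
      ((WithLp.equiv 2 (Fin n → ℝ)).symm a) ((WithLp.equiv 2 (Fin n → ℝ)).symm b)
    exact h
  have hball : closedBall (0 : EuclideanSpace ℝ (Fin n)) t ⊆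
      (WithLp.equiv 2 (Fin n → ℝ)).symm '' (closedBall (0 : Fin n → ℝ) t) := by
    intro x hx
    refine ⟨WithLp.equiv 2 (Fin n → ℝ) x, ?_, (WithLp.equiv 2 (Fin n → ℝ)).symm_apply_apply x⟩
    have h := (PiLp.lipschitzWith_ofLp 2 (fun _ : Fin n => ℝ)).dist_le_mul x 0
    rw [mem_closedBall] at hx ⊢
    simpa using le_trans (by simpa using h) hx
  have hpi : (μH[(d:ℝ) - 1] : Measure (Fin n → ℝ)) = volume := by
    rw [hs, show ((n:ℝ)) = ((Fintype.card (Fin n) : ℕ) : ℝ) by simp]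
    exact hausdorffMeasure_pi_real
  calc μH[(d:ℝ)-1] (sphere (0 : Ed d) 1 ∩ closedBall θ t)
      ≤ μH[(d:ℝ)-1] (f '' (closedBall 0 t)) := measure_mono hsub
    _ ≤ ((2:ℝ≥0) : ℝ≥0∞) ^ ((d:ℝ)-1)
        * μH[(d:ℝ)-1] (closedBall (0 : EuclideanSpace ℝ (Fin n)) t) :=
        (hlip.mono (closedBall_subset_closedBall (by linarith))).hausdorffMeasure_image_le h0
    _ ≤ ((2:ℝ≥0) : ℝ≥0∞) ^ ((d:ℝ)-1)
        * μH[(d:ℝ)-1] ((WithLp.equiv 2 (Fin n → ℝ)).symm '' (closedBall (0 : Fin n → ℝ) t)) :=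
        mul_le_mul_right (measure_mono hball) _
    _ ≤ ((2:ℝ≥0) : ℝ≥0∞) ^ ((d:ℝ)-1) * ((K : ℝ≥0∞) ^ ((d:ℝ)-1)
        * μH[(d:ℝ)-1] (closedBall (0 : Fin n → ℝ) t)) :=
        mul_le_mul_right (hsymm.hausdorffMeasure_image_le h0 _) _
    _ = ((2:ℝ≥0) : ℝ≥0∞) ^ ((d:ℝ)-1) * ((K : ℝ≥0∞) ^ ((d:ℝ)-1)
        * ENNReal.ofReal ((2 * t) ^ n)) := by
        rw [hpi, Real.volume_pi_closedBall 0 ht.le]; simp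
    _ = ((2:ℝ≥0) : ℝ≥0∞) ^ ((d:ℝ)-1) * (K : ℝ≥0∞) ^ ((d:ℝ)-1) * ENNReal.ofReal ((2:ℝ) ^ n)
        * ENNReal.ofReal (t ^ (d-1)) := by
        rw [mul_pow, ENNReal.ofReal_mul (by positivity)]
        ring

lemma sphereFin (d : ℕ) (hd : 2 ≤ d) : μH[(d : ℝ) - 1] (sphere (0 : Ed d) 1) ≠ ⊤ := by
  obtain ⟨A, hA, hcap⟩ := capSmall d hd
  have hcover : sphere (0 : Ed d) 1 ⊆ ⋃ θ : sphere (0 : Ed d) 1, ball (θ : Ed d) (1/2) := by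
    intro x hx
    exact mem_iUnion.2 ⟨⟨x, hx⟩, by simp [mem_ball]⟩
  obtain ⟨s, hs⟩ := (isCompact_sphere (0 : Ed d) 1).elim_finite_subcover _
    (fun _ => isOpen_ball) hcover
  have hsub : sphere (0 : Ed d) 1 ⊆
      ⋃ θ ∈ s, (sphere (0 : Ed d) 1 ∩ closedBall (θ : Ed d) (1/2)) := by
    intro x hx
    obtain ⟨θ, hθs, hθx⟩ := mem_iUnion₂.1 (hs hx)
    exact mem_iUnion₂.2 ⟨θ, hθs, hx, ball_subset_closedBall hθx⟩
  have hbound : ∀ θ : sphere (0 : Ed d) 1,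
      μH[(d:ℝ)-1] (sphere (0 : Ed d) 1 ∩ closedBall (θ : Ed d) (1/2))
        ≤ A * ENNReal.ofReal ((1/2 : ℝ) ^ (d-1)) :=
    fun θ => hcap θ (by simpa using θ.2) (1/2) (by norm_num) le_rfl
  have h1 : μH[(d:ℝ)-1] (sphere (0 : Ed d) 1)
      ≤ ∑ θ ∈ s, (A * ENNReal.ofReal ((1/2 : ℝ) ^ (d-1))) :=
    (measure_mono hsub).trans ((measure_biUnion_finset_le _ _).trans
      (Finset.sum_le_sum fun θ _ => hbound θ))
  refine ne_top_of_le_ne_top ?_ h1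
  exact (ENNReal.sum_lt_top.mpr fun _ _ =>
    ENNReal.mul_lt_top hA.lt_top ENNReal.ofReal_lt_top).ne

lemma capBound (d : ℕ) (hd : 2 ≤ d) :
    ∃ A : ℝ≥0∞, A ≠ ⊤ ∧ ∀ (θ : Ed d), ‖θ‖ = 1 → ∀ t : ℝ, 0 < t →
      μH[(d : ℝ) - 1] (sphere (0 : Ed d) 1 ∩ closedBall θ t)
        ≤ A * ENNReal.ofReal (t ^ (d - 1)) := by
  obtain ⟨A₀, hA₀, hcap⟩ := capSmall d hd
  set M := μH[(d : ℝ) - 1] (sphere (0 : Ed d) 1) with hM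
  have hMt : M ≠ ⊤ := sphereFin d hd
  refine ⟨A₀ + M * (2:ℝ≥0∞) ^ (d-1),
    ENNReal.add_ne_top.2 ⟨hA₀, ENNReal.mul_ne_top hMt (ENNReal.pow_ne_top ENNReal.ofNat_ne_top)⟩, ?_⟩
  intro θ hθ t ht
  by_cases htw : t ≤ 1/2
  · exact (hcap θ hθ t ht htw).trans (mul_le_mul_left (self_le_add_right _ _) _)
  · push_neg at htw
    have hhalf : ENNReal.ofReal ((1/2 : ℝ)) = 2⁻¹ := by
      rw [show (1/2 : ℝ) = (2:ℝ)⁻¹ by norm_num, ENNReal.ofReal_inv_of_pos two_pos]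
      norm_num
    have h1 : (1:ℝ≥0∞) ≤ (2:ℝ≥0∞) ^ (d-1) * ENNReal.ofReal (t ^ (d-1)) := by
      have he : ((1:ℝ≥0∞)) = (2:ℝ≥0∞) ^ (d-1) * ENNReal.ofReal ((1/2 : ℝ) ^ (d-1)) := by
        rw [ENNReal.ofReal_pow (by norm_num), hhalf, ← mul_pow,
          ENNReal.mul_inv_cancel (by norm_num) ENNReal.ofNat_ne_top, one_pow]
      rw [he]
      exact mul_le_mul_right
        (ENNReal.ofReal_le_ofReal (pow_le_pow_left₀ (by norm_num) htw.le _)) _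
    calc μH[(d:ℝ)-1] (sphere (0 : Ed d) 1 ∩ closedBall θ t) ≤ M :=
          measure_mono inter_subset_left
      _ = M * 1 := (mul_one M).symm
      _ ≤ M * ((2:ℝ≥0∞) ^ (d-1) * ENNReal.ofReal (t ^ (d-1))) := mul_le_mul_right h1 M
      _ = (M * (2:ℝ≥0∞) ^ (d-1)) * ENNReal.ofReal (t ^ (d-1)) := by ring
      _ ≤ (A₀ + M * (2:ℝ≥0∞) ^ (d-1)) * ENNReal.ofReal (t ^ (d-1)) :=
          mul_le_mul_left le_add_self _

set_option maxHeartbeats 1000000 in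
/-- estimate (32) of the spherical kernel `K(r,ρ)`: for `ρ ∼ r` the
kernel `K(r,ρ) = ∫_{𝕊^{d-1}} (1+|rθ-ρω|²)^{-γ/2} dω` is bounded by `C r^{-(d-1)}`.  The
surface measure on the unit sphere is the `(d-1)`-dimensional Hausdorff measure. -/
theorem statement15 (d : ℕ) (hd : 2 ≤ d) (γ : ℝ) (hγ : (d : ℝ) - 1 < γ) :
    ∃ C : ℝ, 0 < C ∧
      ∀ (r ρ : ℝ) (θ : Ed d), 0 < r → 0 < ρ → r / 2 ≤ ρ → ρ ≤ 2 * r → ‖θ‖ = 1 →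
        (∫⁻ ω in Metric.sphere (0 : Ed d) 1,
            ENNReal.ofReal ((1 + ‖r • θ - ρ • ω‖ ^ 2) ^ (-(γ / 2)))
              ∂(μH[(d : ℝ) - 1])) ≤
          ENNReal.ofReal (C * r ^ (-((d : ℝ) - 1))) := by
  obtain ⟨A, hAt, hA⟩ := capBound d hd
  set n := d - 1 with hn
  have hs : ((d : ℝ) - 1) = (n : ℝ) := by
    have h1 : (1:ℕ) ≤ d := by omega
    rw [hn]; push_cast [Nat.cast_sub h1]; ring
  have hnγ : (n : ℝ) < γ := by rw [← hs]; exact hγ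
  have hγ0 : 0 < γ := lt_of_le_of_lt (by positivity) hnγ
  set q : ℝ≥0∞ := ENNReal.ofReal ((2:ℝ) ^ ((n:ℝ) - γ)) with hq
  have hq1 : q < 1 := by
    rw [hq, ENNReal.ofReal_lt_one]
    exact Real.rpow_lt_one_of_one_lt_of_neg (by norm_num) (by linarith)
  set Y : ℝ≥0∞ := ENNReal.ofReal ((2:ℝ) ^ (γ/2 + (n:ℝ))) with hY
  set E : ℝ≥0∞ := A * (1 + Y * (1 - q)⁻¹) with hE
  have hEt : E ≠ ⊤ := by
    refine ENNReal.mul_ne_top hAt (ENNReal.add_ne_top.2 ⟨ENNReal.one_ne_top,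
      ENNReal.mul_ne_top ENNReal.ofReal_ne_top (ENNReal.inv_ne_top.2 ?_)⟩)
    rw [ne_eq, tsub_eq_zero_iff_le]
    exact hq1.not_ge
  refine ⟨E.toReal + 1, by positivity, ?_⟩
  intro r ρ θ hr hρ hrρ1 hrρ2 hθ
  set X : ℝ≥0∞ := ENNReal.ofReal ((1/r)^n) with hX
  set g : Ed d → ℝ≥0∞ :=
    fun ω => ENNReal.ofReal ((1 + ‖r • θ - ρ • ω‖ ^ 2) ^ (-(γ / 2))) with hg
  set S : ℕ → Set (Ed d) := fun j => Nat.casesOn j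
    (sphere (0:Ed d) 1 ∩ closedBall θ (1/r))
    (fun k => sphere (0:Ed d) 1 ∩
      (closedBall θ ((2:ℝ)^(k+1)/r) \ closedBall θ ((2:ℝ)^k/r))) with hSdef
  have hS0 : S 0 = sphere (0:Ed d) 1 ∩ closedBall θ (1/r) := rfl
  have hSk : ∀ k : ℕ, S (k+1) = sphere (0:Ed d) 1 ∩
      (closedBall θ ((2:ℝ)^(k+1)/r) \ closedBall θ ((2:ℝ)^k/r)) := fun k => rfl
  have hmeas : ∀ j, MeasurableSet (S j) := by
    intro j
    cases j with
    | zero =>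
        rw [hS0]
        exact isClosed_sphere.measurableSet.inter measurableSet_closedBall
    | succ k =>
        rw [hSk k]
        exact isClosed_sphere.measurableSet.inter
          (measurableSet_closedBall.diff measurableSet_closedBall)
  have hcover : sphere (0:Ed d) 1 ⊆ ⋃ j, S j := by
    intro ω hω
    have hex : ∃ j : ℕ, dist ω θ ≤ 2^j / r := by
      obtain ⟨k, hk⟩ := pow_unbounded_of_one_lt (dist ω θ * r) (one_lt_two (α := ℝ))
      exact ⟨k, by rw [le_div_iff₀ hr]; exact hk.le⟩
    by_cases h0 : dist ω θ ≤ 1/r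
    · exact mem_iUnion.2 ⟨0, hω, by simpa [mem_closedBall] using h0⟩
    · have hj0 : Nat.find hex ≠ 0 := by
        intro h
        have := Nat.find_spec hex
        rw [h] at this
        simp only [pow_zero] at this
        exact h0 this
      obtain ⟨k, hk⟩ := Nat.exists_eq_succ_of_ne_zero hj0
      refine mem_iUnion.2 ⟨k+1, hω, ?_, ?_⟩
      · have := Nat.find_spec hex
        rw [hk] at this
        exact mem_closedBall.2 (by exact_mod_cast this)
      · intro hcon
        exact (Nat.find_min hex (by omega : k < Nat.find hex)) (mem_closedBall.1 hcon)
  have hgle1 : ∀ ω : Ed d, g ω ≤ 1 := by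
    intro ω
    rw [hg]
    refine ENNReal.ofReal_le_one.2 (Real.rpow_le_one_of_one_le_of_nonpos ?_ (by linarith))
    nlinarith [sq_nonneg ‖r • θ - ρ • ω‖]
  -- pointwise bound on annuli
  have hpoint : ∀ (k : ℕ) (ω : Ed d), ω ∈ S (k+1) →
      g ω ≤ ENNReal.ofReal (((2:ℝ)^(2*k)/2) ^ (-(γ/2))) := by
    intro k ω hωS
    rw [hSk k] at hωS
    obtain ⟨hω1, hωin, hωout⟩ := hωS
    have hω : ‖ω‖ = 1 := by simpa using hω1
    have hdist : (2:ℝ)^k/r ≤ dist ω θ := (not_le.1 fun h => hωout (mem_closedBall.2 h)).le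
    have hnd : (2:ℝ)^k/r ≤ ‖θ - ω‖ := by
      rw [norm_sub_rev, ← dist_eq_norm]; exact hdist
    have hid := norm_smul_sub_smul_sq θ ω hθ hω r ρ
    have h1 : ((2:ℝ)^k/r)^2 ≤ ‖θ - ω‖^2 := pow_le_pow_left₀ (by positivity) hnd 2
    have h1' : (2:ℝ)^(2*k)/r^2 ≤ ‖θ - ω‖^2 := by
      rw [div_pow, ← pow_mul, mul_comm k 2] at h1; exact h1
    have hrρh : r^2/2 ≤ r*ρ := by nlinarith
    have h2 : (2:ℝ)^(2*k)/2 ≤ (r*ρ) * ‖θ - ω‖^2 := by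
      calc (2:ℝ)^(2*k)/2 = (r^2/2) * ((2:ℝ)^(2*k)/r^2) := by field_simp
        _ ≤ (r*ρ) * ‖θ - ω‖^2 := mul_le_mul hrρh h1' (by positivity) (by positivity)
    have hb : (2:ℝ)^(2*k)/2 ≤ ‖r • θ - ρ • ω‖^2 := by nlinarith [sq_nonneg (r - ρ)]
    rw [hg]
    apply ENNReal.ofReal_le_ofReal
    exact Real.rpow_le_rpow_of_nonpos (by positivity) (by linarith) (by linarith)
  -- real arithmetic
  have huge : ∀ k : ℕ, ((2:ℝ)^(2*k)/2) ^ (-(γ/2)) * ((2:ℝ)^(k+1)/r) ^ n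
      = (2:ℝ) ^ (γ/2 + (n:ℝ)) * ((2:ℝ) ^ ((n:ℝ) - γ))^k * (1/r)^n := by
    intro k
    have h2 : (0:ℝ) < 2 := two_pos
    have e1 : ((2:ℝ)^(2*k)/2) = (2:ℝ) ^ ((2*(k:ℝ) - 1)) := by
      rw [Real.rpow_sub h2, Real.rpow_one]
      congr 1
      rw [show (2*(k:ℝ)) = ((2*k : ℕ) : ℝ) by push_cast; ring, Real.rpow_natCast]
    have e2 : ((2:ℝ)^(2*k)/2) ^ (-(γ/2)) = (2:ℝ) ^ ((2*(k:ℝ) - 1) * (-(γ/2))) := by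
      rw [e1, ← Real.rpow_mul h2.le]
    have e3 : (((2:ℝ)^(k+1)) : ℝ)^n = (2:ℝ) ^ (((k:ℝ)+1) * (n:ℝ)) := by
      rw [← pow_mul, ← Real.rpow_natCast 2 ((k+1)*n)]
      congr 1; push_cast; ring
    have e4 : ((2:ℝ)^(k+1)/r) ^ n = ((2:ℝ)^(k+1))^n * (1/r)^n := by
      rw [div_eq_mul_one_div, mul_pow]
    have e5 : ((2:ℝ) ^ ((n:ℝ) - γ))^k = (2:ℝ) ^ (((n:ℝ) - γ) * (k:ℝ)) := by
      rw [← Real.rpow_natCast ((2:ℝ) ^ ((n:ℝ) - γ)) k, ← Real.rpow_mul h2.le]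
    rw [e2, e4, e3, e5, ← mul_assoc, ← Real.rpow_add h2, ← Real.rpow_add h2]
    congr 2
    ring
  -- piece bounds
  have hpiece0 : ∫⁻ ω in S 0, g ω ∂(μH[(d:ℝ)-1]) ≤ A * X := by
    calc ∫⁻ ω in S 0, g ω ∂(μH[(d:ℝ)-1]) ≤ ∫⁻ _ in S 0, 1 ∂(μH[(d:ℝ)-1]) :=
          setLIntegral_mono' (hmeas 0) (fun ω _ => hgle1 ω)
      _ = μH[(d:ℝ)-1] (S 0) := setLIntegral_one _
      _ ≤ A * X := by rw [hS0, hX]; exact hA θ hθ (1/r) (by positivity)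
  have hpiecek : ∀ k : ℕ, ∫⁻ ω in S (k+1), g ω ∂(μH[(d:ℝ)-1]) ≤ A * X * (Y * q^k) := by
    intro k
    have hSsub : S (k+1) ⊆ sphere (0:Ed d) 1 ∩ closedBall θ ((2:ℝ)^(k+1)/r) := by
      rw [hSk k]; exact inter_subset_inter_right _ diff_subset
    calc ∫⁻ ω in S (k+1), g ω ∂(μH[(d:ℝ)-1])
        ≤ ∫⁻ _ in S (k+1), ENNReal.ofReal (((2:ℝ)^(2*k)/2) ^ (-(γ/2))) ∂(μH[(d:ℝ)-1]) :=
          setLIntegral_mono' (hmeas (k+1)) (hpoint k)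
      _ = ENNReal.ofReal (((2:ℝ)^(2*k)/2) ^ (-(γ/2))) * μH[(d:ℝ)-1] (S (k+1)) :=
          setLIntegral_const _ _
      _ ≤ ENNReal.ofReal (((2:ℝ)^(2*k)/2) ^ (-(γ/2)))
          * (A * ENNReal.ofReal (((2:ℝ)^(k+1)/r) ^ n)) :=
          mul_le_mul_right ((measure_mono hSsub).trans (hA θ hθ _ (by positivity))) _
      _ = A * ENNReal.ofReal (((2:ℝ)^(2*k)/2) ^ (-(γ/2)) * ((2:ℝ)^(k+1)/r) ^ n) := by
          rw [ENNReal.ofReal_mul (by positivity)]; ring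
      _ = A * ENNReal.ofReal ((2:ℝ) ^ (γ/2 + (n:ℝ)) * ((2:ℝ) ^ ((n:ℝ) - γ))^k * (1/r)^n) := by
          rw [huge k]
      _ = A * (ENNReal.ofReal ((2:ℝ) ^ (γ/2 + (n:ℝ)))
          * ENNReal.ofReal (((2:ℝ) ^ ((n:ℝ) - γ))^k) * ENNReal.ofReal ((1/r)^n)) := by
          rw [ENNReal.ofReal_mul (by positivity), ENNReal.ofReal_mul (by positivity)]
      _ = A * X * (Y * q^k) := by
          rw [ENNReal.ofReal_pow (by positivity), hX, hY, hq]; ring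
  calc ∫⁻ ω in sphere (0 : Ed d) 1, g ω ∂(μH[(d:ℝ)-1])
      ≤ ∫⁻ ω in ⋃ j, S j, g ω ∂(μH[(d:ℝ)-1]) :=
        lintegral_mono' (Measure.restrict_mono hcover le_rfl) le_rfl
    _ ≤ ∑' j, ∫⁻ ω in S j, g ω ∂(μH[(d:ℝ)-1]) := lintegral_iUnion_le _ _
    _ = (∫⁻ ω in S 0, g ω ∂(μH[(d:ℝ)-1]))
        + ∑' k, ∫⁻ ω in S (k+1), g ω ∂(μH[(d:ℝ)-1]) := tsum_eq_zero_add' ENNReal.summable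
    _ ≤ A * X + ∑' k, (A * X * (Y * q^k)) := add_le_add hpiece0 (ENNReal.tsum_le_tsum hpiecek)
    _ = A * X + (A * X * Y) * ∑' k, q^k := by
        rw [← ENNReal.tsum_mul_left]
        congr 1
        exact tsum_congr fun k => by ring
    _ = A * X * (1 + Y * (1 - q)⁻¹) := by rw [ENNReal.tsum_geometric]; ring
    _ = E * X := by rw [hE]; ring
    _ ≤ ENNReal.ofReal (E.toReal + 1) * X := by
        refine mul_le_mul_left ?_ _
        calc E = ENNReal.ofReal E.toReal := (ENNReal.ofReal_toReal hEt).symm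
          _ ≤ ENNReal.ofReal (E.toReal + 1) :=
            ENNReal.ofReal_le_ofReal (by linarith [ENNReal.toReal_nonneg (a := E)])
    _ = ENNReal.ofReal ((E.toReal + 1) * (1/r)^n) := by
        rw [hX, ENNReal.ofReal_mul (by positivity)]
    _ = ENNReal.ofReal ((E.toReal + 1) * r ^ (-((d:ℝ)-1))) := by
        congr 1
        rw [hs, Real.rpow_neg hr.le, Real.rpow_natCast, one_div, inv_pow]

end
end
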